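/- Let 𝔅 be a bornology on a topological space X with a closed base, and suppose X is 𝔅-Lindelöf. Then X satisfies Ufin(Γ_𝔅, 𝒪) if and only if X satisfies Ufin(𝒪_𝔅, 𝒪). -/

import Mathlib

open Set

universe u

def IsBornology {X : Type u} (B : Set (Set X)) : Prop :=
  ⋃₀ B = univ ∧ (∀ b ∈ B, ∀ b' ⊆ b, b' ∈ B) ∧ ∀ b ∈ B, ∀ b' ∈ B, b ∪ b' ∈ B

def HasClosedBase {X : Type u} [TopologicalSpace X] (B : Set (Set X)) : Prop :=
  ∃ B0 ⊆ B, (∀ b ∈ B0, IsClosed b) ∧ ∀ b ∈ B, ∃ b0 ∈ B0, b ⊆ b0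

def HasCompactBase {X : Type u} [TopologicalSpace X] (B : Set (Set X)) : Prop :=
  ∃ B0 ⊆ B, (∀ b ∈ B0, IsCompact b) ∧ ∀ b ∈ B, ∃ b0 ∈ B0, b ⊆ b0

def IsBCover {X : Type u} [TopologicalSpace X] (B U : Set (Set X)) : Prop :=
  (∀ u ∈ U, IsOpen u) ∧ univ ∉ U ∧ ∀ b ∈ B, ∃ u ∈ U, b ⊆ u

def IsGammaBCover {X : Type u} [TopologicalSpace X] (B U : Set (Set X)) : Prop :=
  U.Infinite ∧ (∀ u ∈ U, IsOpen u ∧ u ≠ univ) ∧ ∀ b ∈ B, {u ∈ U | ¬ b ⊆ u}.Finite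

def IsOpenCover {X : Type u} [TopologicalSpace X] (U : Set (Set X)) : Prop :=
  (∀ u ∈ U, IsOpen u) ∧ ⋃₀ U = univ

def IsOmegaCover {X : Type u} [TopologicalSpace X] (U : Set (Set X)) : Prop :=
  (∀ u ∈ U, IsOpen u) ∧ univ ∉ U ∧ ∀ F : Set X, F.Finite → ∃ u ∈ U, F ⊆ u

def IsGammaCover {X : Type u} [TopologicalSpace X] (U : Set (Set X)) : Prop :=
  U.Infinite ∧ (∀ u ∈ U, IsOpen u) ∧ ∀ x : X, {u ∈ U | x ∉ u}.Finite

def BLindelof {X : Type u} [TopologicalSpace X] (B : Set (Set X)) : Prop :=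
  ∀ U, IsBCover B U → ∃ V ⊆ U, V.Countable ∧ IsBCover B V

def S1 {X : Type u} (A C : Set (Set X) → Prop) : Prop :=
  ∀ U : ℕ → Set (Set X), (∀ n, A (U n)) →
    ∃ V : ℕ → Set X, (∀ n, V n ∈ U n) ∧ C (Set.range V)

def Sfin {X : Type u} (A C : Set (Set X) → Prop) : Prop :=
  ∀ U : ℕ → Set (Set X), (∀ n, A (U n)) →
    ∃ V : ℕ → Set (Set X), (∀ n, (V n).Finite ∧ V n ⊆ U n) ∧ C (⋃ n, V n)

def Ufin {X : Type u} (A C : Set (Set X) → Prop) : Prop :=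
  ∀ U : ℕ → Set (Set X), (∀ n, A (U n)) →
    ∃ V : ℕ → Set (Set X), (∀ n, (V n).Finite ∧ V n ⊆ U n) ∧
      ((∃ n, ⋃₀ V n = univ) ∨ C {s | ∃ n, s = ⋃₀ V n})

lemma gammaB_isBCover {X : Type u} [TopologicalSpace X] {B U : Set (Set X)}
    (h : IsGammaBCover B U) : IsBCover B U := by
  obtain ⟨hinf, hop, hb⟩ := h
  refine ⟨fun u hu => (hop u hu).1, fun hU => (hop _ hU).2 rfl, ?_⟩
  intro b hb'
  obtain ⟨u, hu⟩ := (hinf.diff (hb b hb')).nonempty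
  refine ⟨u, hu.1, ?_⟩
  by_contra h
  exact hu.2 ⟨hu.1, h⟩

lemma aux_mono {α : Type*} (w : ℕ → Set α) (hw : Monotone w)
    (hfin : (Set.range w).Finite) : ∃ N, ∀ k, w k ⊆ w N := by
  obtain ⟨s, hs, hmax⟩ := hfin.exists_maximalFor id _ ⟨w 0, mem_range_self 0⟩
  obtain ⟨N, rfl⟩ := hs
  refine ⟨N, fun k => ?_⟩
  rcases le_total k N with h | h
  · exact hw h
  · exact hmax (mem_range_self k) (hw h)

lemma finite_subset_range {α : Type*} {g : ℕ → α} {s : Set α} (hs : s.Finite)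
    (hsub : s ⊆ Set.range g) : ∃ K : Set ℕ, K.Finite ∧ g '' K = s := by
  classical
  have := hs.to_subtype
  choose idx hidx using fun x : s => hsub x.2
  refine ⟨Set.range idx, Set.finite_range _, ?_⟩
  ext y
  constructor
  · rintro ⟨i, ⟨x, rfl⟩, rfl⟩; rw [hidx]; exact x.2
  · intro hy; exact ⟨idx ⟨y, hy⟩, ⟨⟨y, hy⟩, rfl⟩, hidx _⟩
theorem stmt6 {X : Type u} [TopologicalSpace X] (B : Set (Set X)) (hB : IsBornology B)
    (hcb : HasClosedBase B) (hL : BLindelof B) :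
    Ufin (IsGammaBCover B) (IsOpenCover (X := X)) ↔
      Ufin (IsBCover B) (IsOpenCover (X := X)) := by
  classical
  constructor
  · intro hG U hU
    by_cases hc : ∃ n, ∃ V ⊆ U n, V.Finite ∧ ⋃₀ V = univ
    · obtain ⟨n0, V0, hsub, hfin, hcov⟩ := hc
      refine ⟨fun n => if n = n0 then V0 else ∅, fun n => ?_, Or.inl ⟨n0, by simp [hcov]⟩⟩
      by_cases h : n = n0 <;> simp [h, hfin, hsub]
    · push_neg at hc
      -- X is nonempty
      have hempty : (∅ : Set X) ≠ univ := by
        have := hc 0 ∅ (empty_subset _) finite_empty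
        simpa using this
      -- every singleton is in B
      have hsing : ∀ x : X, {x} ∈ B := by
        intro x
        have hx : x ∈ ⋃₀ B := hB.1 ▸ mem_univ x
        obtain ⟨b, hbB, hxb⟩ := hx
        exact hB.2.1 b hbB {x} (singleton_subset_iff.mpr hxb)
      -- countable B-subcovers
      choose C hCsub hCcount hCcov using fun n => hL (U n) (hU n)
      have hCne : ∀ n, (C n).Nonempty := by
        intro n
        obtain ⟨x⟩ : Nonempty X := by
          by_contra h
          exact hempty (by simp [univ_eq_empty_iff.mpr (not_nonempty_iff.mp h)])
        obtain ⟨u, hu, _⟩ := (hCcov n).2.2 {x} (hsing x)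
        exact ⟨u, hu⟩
      choose f hf using fun n => ((hCcount n)).exists_eq_range (hCne n)
      -- the increasing finite unions
      set w : ℕ → ℕ → Set X := fun n k => ⋃₀ (f n '' Iic k) with hw
      have hfU : ∀ n i, f n i ∈ U n := by
        intro n i
        exact hCsub n ((hf n) ▸ mem_range_self i)
      have himgsub : ∀ n k, f n '' Iic k ⊆ U n := by
        rintro n k u ⟨i, _, rfl⟩; exact hfU n i
      have himgfin : ∀ n k, (f n '' Iic k).Finite := fun n k => (finite_Iic k).image _
      have hwmono : ∀ n, Monotone (w n) := by
        intro n j k hjk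
        exact sUnion_subset_sUnion (image_mono (Iic_subset_Iic.mpr hjk))
      have hwopen : ∀ n k, IsOpen (w n k) := by
        intro n k
        exact isOpen_sUnion (fun u hu => (hU n).1 u (himgsub n k hu))
      have hwne : ∀ n k, w n k ≠ univ := fun n k =>
        hc n _ (himgsub n k) (himgfin n k)
      have hwcov : ∀ n x, ∃ k, x ∈ w n k := by
        intro n x
        obtain ⟨u, hu, hxu⟩ := (hCcov n).2.2 {x} (hsing x)
        obtain ⟨i, rfl⟩ := (hf n) ▸ hu
        exact ⟨i, ⟨f n i, ⟨i, self_mem_Iic, rfl⟩, singleton_subset_iff.mp hxu⟩⟩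
      -- range (w n) is a gamma-B-cover
      have hgamma : ∀ n, IsGammaBCover B (Set.range (w n)) := by
        intro n
        refine ⟨?_, ?_, ?_⟩
        · intro hfin
          obtain ⟨N, hN⟩ := aux_mono (w n) (hwmono n) hfin
          refine hwne n N ?_
          apply eq_univ_of_forall
          intro x
          obtain ⟨k, hk⟩ := hwcov n x
          exact hN k hk
        · rintro u ⟨k, rfl⟩
          exact ⟨hwopen n k, hwne n k⟩
        · intro b hb
          obtain ⟨u, hu, hbu⟩ := (hCcov n).2.2 b hb
          obtain ⟨i, rfl⟩ := (hf n) ▸ hu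
          have : {u ∈ Set.range (w n) | ¬ b ⊆ u} ⊆ (w n) '' (Iio i) := by
            rintro u ⟨⟨k, rfl⟩, hk⟩
            refine ⟨k, ?_, rfl⟩
            by_contra hki
            simp only [mem_Iio, not_lt] at hki
            exact hk (hbu.trans (subset_sUnion_of_mem ⟨i, hki, rfl⟩))
          exact ((finite_Iio i).image _).subset this
      -- apply Ufin for gamma covers
      obtain ⟨G, hG1, hG2⟩ := hG (fun n => Set.range (w n)) hgamma
      -- pull back finite selections
      choose K hKfin hKeq using fun n =>
        finite_subset_range (hG1 n).1 (hG1 n).2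
      set S : ℕ → Set ℕ := fun n => ⋃ k ∈ K n, Iic k with hS
      have hSfin : ∀ n, (S n).Finite := fun n =>
        (hKfin n).biUnion (fun k _ => finite_Iic k)
      refine ⟨fun n => f n '' S n, fun n => ?_, ?_⟩
      · exact ⟨(hSfin n).image _, by rintro u ⟨i, _, rfl⟩; exact hfU n i⟩
      · have key : ∀ n, ⋃₀ (f n '' S n) = ⋃₀ G n := by
          intro n
          rw [← hKeq n]
          ext x
          simp only [mem_sUnion, mem_image, hS, mem_iUnion, mem_Iic, hw]
          constructor
          · rintro ⟨u, ⟨i, ⟨k, hk, hik⟩, rfl⟩, hx⟩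
            exact ⟨w n k, ⟨k, hk, rfl⟩, ⟨f n i, ⟨i, hik, rfl⟩, hx⟩⟩
          · rintro ⟨u, ⟨k, hk, rfl⟩, hx⟩
            obtain ⟨v, ⟨i, hik, rfl⟩, hxv⟩ := hx
            exact ⟨f n i, ⟨i, ⟨k, hk, hik⟩, rfl⟩, hxv⟩
        rcases hG2 with ⟨n, hn⟩ | hcov
        · exact Or.inl ⟨n, (key n).trans hn⟩
        · refine Or.inr ?_
          have : {s | ∃ n, s = ⋃₀ (f n '' S n)} = {s | ∃ n, s = ⋃₀ G n} := by
            ext s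
            constructor
            · rintro ⟨n, rfl⟩; exact ⟨n, key n⟩
            · rintro ⟨n, rfl⟩; exact ⟨n, (key n).symm⟩
          rw [this]
          exact hcov
  · intro h U hU
    exact h U (fun n => gammaB_isBCover (hU n))
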